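/- Let G be a group, H a subgroup, and θ : H → H' an isomorphism onto another subgroup H' of G. Let G*_θ = ⟨G, u | u h u^{-1} = θ(h) for all h ∈ H⟩ be the HNN extension of G relative to θ, with stable letter u. Let N be the normal closure in G*_θ of H. Then (G*_θ)/N is isomorphic to (G/⟨H, H'⟩^G) * ℤ, where ⟨H, H'⟩^G is the normal closure of H ∪ H' in G. -/

import Mathlib

/-- Let `G*_θ` be the HNN extension of `G` relative to an isomorphism
`θ : A ≃ B` between subgroups of `G`, and let `N` be the normal closure in `G*_θ` of (the
image of) `A`. Then `(G*_θ)/N ≅ (G / ⟨A ∪ B⟩^G) * ℤ`, the free product of the quotient of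
`G` by the normal closure of `A ∪ B` with the infinite cyclic group. -/
theorem hnn_quotient_by_normal_closure {G : Type*} [Group G] (A B : Subgroup G) (θ : A ≃* B) :
    Nonempty
      ((HNNExtension G A B θ ⧸
          Subgroup.normalClosure ((HNNExtension.of (φ := θ)) '' (A : Set G))) ≃*
        Monoid.Coprod (G ⧸ Subgroup.normalClosure ((A : Set G) ∪ (B : Set G)))
          (Multiplicative ℤ)) := by
  set N : Subgroup (HNNExtension G A B θ) :=
    Subgroup.normalClosure ((HNNExtension.of (φ := θ)) '' (A : Set G)) with hN
  set M : Subgroup G := Subgroup.normalClosure ((A : Set G) ∪ (B : Set G)) with hM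
  set T := Monoid.Coprod (G ⧸ M) (Multiplicative ℤ) with hT
  -- the map G → T killing A and B
  have hx : ∀ a : A,
      (Monoid.Coprod.inr (Multiplicative.ofAdd (1:ℤ)) : T) *
        (Monoid.Coprod.inl.comp (QuotientGroup.mk' M)) ↑a =
      (Monoid.Coprod.inl.comp (QuotientGroup.mk' M)) (θ a : G) *
        Monoid.Coprod.inr (Multiplicative.ofAdd (1:ℤ)) := by
    intro a
    have h1 : (QuotientGroup.mk' M) (a : G) = 1 :=
      (QuotientGroup.eq_one_iff _).2 (Subgroup.subset_normalClosure (Or.inl a.2))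
    have h2 : (QuotientGroup.mk' M) (θ a : G) = 1 :=
      (QuotientGroup.eq_one_iff _).2 (Subgroup.subset_normalClosure (Or.inr (θ a).2))
    simp [MonoidHom.comp_apply, h1, h2]
  set f0 : HNNExtension G A B θ →* T :=
    HNNExtension.lift (Monoid.Coprod.inl.comp (QuotientGroup.mk' M))
      (Monoid.Coprod.inr (Multiplicative.ofAdd (1:ℤ))) hx with hf0
  have hNker : N ≤ f0.ker := by
    apply Subgroup.normalClosure_le_normal
    rintro _ ⟨a, ha, rfl⟩
    have h1 : (QuotientGroup.mk' M) a = 1 :=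
      (QuotientGroup.eq_one_iff _).2 (Subgroup.subset_normalClosure (Or.inl ha))
    show f0 (HNNExtension.of a) = 1
    rw [hf0, HNNExtension.lift_of, MonoidHom.comp_apply, h1, map_one]
  set f : (HNNExtension G A B θ ⧸ N) →* T := QuotientGroup.lift N f0 hNker with hf
  -- the map G → HNN/N killing M
  set g0 : G →* HNNExtension G A B θ ⧸ N :=
    (QuotientGroup.mk' N).comp HNNExtension.of with hg0
  have hMker : M ≤ g0.ker := by
    apply Subgroup.normalClosure_le_normal
    rintro x (hx' | hx')
    · exact (QuotientGroup.eq_one_iff _).2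
        (Subgroup.subset_normalClosure ⟨x, hx', rfl⟩)
    · have hxeq : (HNNExtension.of x : HNNExtension G A B θ)
          = HNNExtension.t * HNNExtension.of (θ.symm ⟨x, hx'⟩ : G) * HNNExtension.t⁻¹ := by
        have h := HNNExtension.equiv_eq_conj (φ := θ) (θ.symm ⟨x, hx'⟩)
        rwa [θ.apply_symm_apply] at h
      have hmem : (HNNExtension.of (θ.symm ⟨x, hx'⟩ : G) : HNNExtension G A B θ) ∈ N :=
        Subgroup.subset_normalClosure ⟨_, (θ.symm ⟨x, hx'⟩).2, rfl⟩
      refine (QuotientGroup.eq_one_iff _).2 ?_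
      rw [hxeq]
      exact Subgroup.Normal.conj_mem inferInstance _ hmem _
  set g : T →* HNNExtension G A B θ ⧸ N :=
    Monoid.Coprod.lift (QuotientGroup.lift M g0 hMker)
      (zpowersHom _ ((QuotientGroup.mk' N) HNNExtension.t)) with hg
  refine ⟨MonoidHom.toMulEquiv f g ?_ ?_⟩
  · apply QuotientGroup.monoidHom_ext
    apply HNNExtension.hom_ext
    · ext x
      simp [hf, hg, hf0, hg0]
      rfl
    · simp [hf, hg, hf0, hg0]
      rfl
  · apply Monoid.Coprod.hom_ext
    · apply QuotientGroup.monoidHom_ext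
      ext x
      simp [hf, hg, hf0, hg0]
      rfl
    · ext
      simp [hf, hg, hf0, hg0]
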